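/- Let p : D → C be a coCartesian fibration of ∞-categories and x an object of C. Then the canonical functor from the fiber p⁻¹(x) to the slice D ×_C C_{/x} (equivalently, for each object over x, comparing the fiber inclusion to the comma category) is cofinal. -/

import Mathlib

open CategoryTheory

universe v u

variable {C : Type u} [Category.{v} C]

/-- For a coCartesian fibration, modeled as the Grothendieck construction
`Grothendieck F → C` of a functor `F : C ⥤ Cat`, and an object `x : C`, the canonical
functor from the fiber `F.obj x = p⁻¹(x)` to the slice `D ×_C C_{/x}`, sending `d` to
`(d, 𝟙 x)`. -/
def fiberToSlice (F : C ⥤ Cat) (x : C) :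
    F.obj x ⥤ CostructuredArrow (Grothendieck.forget F) x where
  obj d := CostructuredArrow.mk (Y := (Grothendieck.ι F x).obj d)
    (𝟙 x : (Grothendieck.forget F).obj ((Grothendieck.ι F x).obj d) ⟶ x)
  map {d d'} f := CostructuredArrow.homMk ((Grothendieck.ι F x).map f) (by
    simp [Grothendieck.ι]; exact Category.id_comp _)
  map_id d := by
    apply CostructuredArrow.hom_ext
    exact (Grothendieck.ι F x).map_id d
  map_comp {X Y Z} f g := by
    apply CostructuredArrow.hom_ext
    exact (Grothendieck.ι F x).map_comp f g


/-- Auxiliary: a fiber morphism composed after the component of `ιNatTrans` recovers the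
Grothendieck morphism with the given base and fiber. -/
lemma grothendieck_fact (F : C ⥤ Cat) (x : C) (X : Grothendieck F) (d : F.obj x)
    (f : X.base ⟶ x) (φ : (F.map f).toFunctor.obj X.fiber ⟶ d) :
    (Grothendieck.ιNatTrans f).app X.fiber ≫ (Grothendieck.ι F x).map φ =
      (⟨f, φ⟩ : X ⟶ (Grothendieck.ι F x).obj d) := by
  apply Grothendieck.ext <;> simp [Grothendieck.ιNatTrans, Grothendieck.ι]
  erw [(F.map (𝟙 x)).toFunctor.map_id]
  erw [Category.id_comp, eqToHom_trans_assoc, eqToHom_trans_assoc]; exact Category.id_comp φ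

section
variable (F : C ⥤ Cat) (x : C) (A : CostructuredArrow (Grothendieck.forget F) x)

/-- The candidate initial object of `StructuredArrow A (fiberToSlice F x)`, given by the
coCartesian pushforward of `A.left` along `A.hom`. -/
def initCand : StructuredArrow A (fiberToSlice F x) :=
  StructuredArrow.mk (Y := (F.map A.hom).toFunctor.obj A.left.fiber)
    (CostructuredArrow.homMk ((Grothendieck.ιNatTrans A.hom).app A.left.fiber)
      (by simp [fiberToSlice, Grothendieck.forget]; exact Category.comp_id _))

lemma initCand_base_eq (B : StructuredArrow A (fiberToSlice F x)) :
    B.hom.left.base = A.hom := by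
  simpa [fiberToSlice, Grothendieck.forget] using (Category.comp_id _).symm.trans (CostructuredArrow.w B.hom)

lemma initCand_key (d : F.obj x) (h : A.left ⟶ (Grothendieck.ι F x).obj d)
    (hb : h.base = A.hom) :
    ((Grothendieck.ιNatTrans A.hom).app A.left.fiber) ≫
      (Grothendieck.ι F x).map (eqToHom (by rw [hb]; rfl) ≫ h.fiber) = h := by
  obtain ⟨b, φ⟩ := h
  dsimp at hb ⊢
  subst hb
  exact (congrArg _ (congrArg _ (Category.id_comp _))).trans (grothendieck_fact F x A.left d A.hom φ)

/-- A morphism from the candidate initial object to any object. -/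
def initHom (B : StructuredArrow A (fiberToSlice F x)) : initCand F x A ⟶ B :=
  StructuredArrow.homMk
    (eqToHom (by rw [initCand_base_eq F x A B]; rfl) ≫ B.hom.left.fiber)
    (by
      apply CostructuredArrow.hom_ext
      exact initCand_key F x A B.right B.hom.left (initCand_base_eq F x A B))

end

/-- Let `p : D → C` be a coCartesian fibration and `x` an object of `C`.
Then the canonical functor from the fiber `p⁻¹(x)` to the slice `D ×_C C_{/x}`,
sending `d` to `(d, 𝟙 x)`, is cofinal. -/
theorem fiberToSlice_final (F : C ⥤ Cat) (x : C) : (fiberToSlice F x).Final := by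
  constructor
  intro A
  have : Nonempty (StructuredArrow A (fiberToSlice F x)) := ⟨initCand F x A⟩
  exact zigzag_isConnected fun B₁ B₂ =>
    Relation.ReflTransGen.tail (Relation.ReflTransGen.single (Or.inr ⟨initHom F x A B₁⟩))
      (Or.inl ⟨initHom F x A B₂⟩)
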